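/- Define c_{ℓ,m} for integers ℓ, m ≥ 0 by the recursion c_{ℓ,m} = (m+1)·Cat(ℓ+m+1) − ∑_{i=0}^{m} ( ∑_{j=1}^{i} Cat(j−1)·Cat(ℓ+m+1−j) + ∑_{j=1}^{m−i} Cat(ℓ+m+1−j)·Cat(j−1) ). Then c_{ℓ,m} = C(2(ℓ+1), ℓ+1)·C(2(m+1), m+1)·(ℓ+1)(m+1)/(2(ℓ+m+1)(ℓ+m+2)). -/
import Mathlib

noncomputable def b (l m : ℕ) : ℚ :=
  (Nat.choose (2 * (l + 1)) (l + 1) : ℚ) * (Nat.choose (2 * (m + 1)) (m + 1) : ℚ) *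
    ((l + 1) * (m + 1)) / (2 * (l + m + 1) * (l + m + 2))

/-- `(n+2) * catalan (n+1) = 2*(2n+1) * catalan n` over `ℚ`. -/
lemma cat_q (n : ℕ) : ((n : ℚ) + 2) * (catalan (n+1) : ℚ) = 2*(2*(n:ℚ)+1) * (catalan n : ℚ) := by
  have h1 : ((n:ℚ) + 1 + 1) * (catalan (n+1) : ℚ) = (Nat.centralBinom (n+1) : ℚ) := by
    exact_mod_cast congrArg (Nat.cast : ℕ → ℚ) (succ_mul_catalan_eq_centralBinom (n+1))
  have h2 : ((n:ℚ) + 1) * (Nat.centralBinom (n+1) : ℚ)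
      = 2*(2*(n:ℚ)+1) * (Nat.centralBinom n : ℚ) := by
    exact_mod_cast congrArg (Nat.cast : ℕ → ℚ) (Nat.succ_mul_centralBinom_succ n)
  have h3 : ((n:ℚ) + 1) * (catalan n : ℚ) = (Nat.centralBinom n : ℚ) := by
    exact_mod_cast congrArg (Nat.cast : ℕ → ℚ) (succ_mul_catalan_eq_centralBinom n)
  have hne : ((n:ℚ) + 1) ≠ 0 := by positivity
  apply mul_left_cancel₀ hne
  linear_combination ((n:ℚ)+1) * h1 + h2 - 2*(2*(n:ℚ)+1) * h3

/-- `choose (2(n+1)) (n+1) = (n+2) * catalan (n+1)` over `ℚ`. -/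
lemma choose_cat (n : ℕ) :
    (Nat.choose (2 * (n + 1)) (n + 1) : ℚ) = ((n:ℚ) + 2) * (catalan (n+1) : ℚ) := by
  have h1 : ((n:ℚ) + 1 + 1) * (catalan (n+1) : ℚ) = (Nat.centralBinom (n+1) : ℚ) := by
    exact_mod_cast congrArg (Nat.cast : ℕ → ℚ) (succ_mul_catalan_eq_centralBinom (n+1))
  have h2 : (Nat.centralBinom (n+1) : ℚ) = (Nat.choose (2 * (n + 1)) (n + 1) : ℚ) := by
    rw [Nat.centralBinom]
  linarith [h1, h2]

/-- The recurrence for `b` along an antidiagonal. -/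
lemma b_rec (l m : ℕ) :
    b l (m+2) = 2 * b (l+1) (m+1) - b (l+2) m
      - 2 * (catalan (m+1) : ℚ) * (catalan (l+1) : ℚ) := by
  have cl1 := cat_q (l+1)
  have cl2 := cat_q (l+2)
  have cm1 := cat_q (m+1)
  have cm2 := cat_q (m+2)
  push_cast at cl1 cl2 cm1 cm2
  have gl2 : (catalan (l+1+1) : ℚ)
      = 2*(2*(l:ℚ)+3)*(catalan (l+1) : ℚ) / ((l:ℚ)+3) := by
    rw [eq_div_iff (by positivity)]
    linear_combination cl1
  have gl3 : (catalan (l+2+1) : ℚ)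
      = 2*(2*(l:ℚ)+5)*(catalan (l+1+1) : ℚ) / ((l:ℚ)+4) := by
    rw [eq_div_iff (by positivity)]
    linear_combination cl2
  have gm2 : (catalan (m+1+1) : ℚ)
      = 2*(2*(m:ℚ)+3)*(catalan (m+1) : ℚ) / ((m:ℚ)+3) := by
    rw [eq_div_iff (by positivity)]
    linear_combination cm1
  have gm3 : (catalan (m+2+1) : ℚ)
      = 2*(2*(m:ℚ)+5)*(catalan (m+1+1) : ℚ) / ((m:ℚ)+4) := by
    rw [eq_div_iff (by positivity)]
    linear_combination cm2
  simp only [b]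
  rw [choose_cat l, choose_cat (l+1), choose_cat (l+2),
    choose_cat m, choose_cat (m+1), choose_cat (m+2)]
  rw [gl3, gm3, gl2, gm2]
  have d1 : ((l:ℚ)+3) ≠ 0 := by positivity
  have d2 : ((l:ℚ)+4) ≠ 0 := by positivity
  have d3 : ((m:ℚ)+3) ≠ 0 := by positivity
  have d4 : ((m:ℚ)+4) ≠ 0 := by positivity
  have d5 : ((l:ℚ)+(m:ℚ)+3) ≠ 0 := by positivity
  have d6 : ((l:ℚ)+(m:ℚ)+4) ≠ 0 := by positivity
  push_cast
  field_simp
  ring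

noncomputable def U (n m : ℕ) : ℚ :=
  ∑ i ∈ Finset.range (m+1), ∑ j ∈ Finset.Icc 1 i,
    (catalan (j - 1) : ℚ) * (catalan (n - j) : ℚ)

noncomputable def A (n m : ℕ) : ℚ := ((m:ℚ) + 1) * (catalan n : ℚ) - 2 * U n m

lemma A_rec (n m : ℕ) :
    A n (m+2) = 2 * A n (m+1) - A n m
      - 2 * (catalan (m+1) : ℚ) * (catalan (n - (m+2)) : ℚ) := by
  have hU2 : U n (m+2) = U n (m+1) + ∑ j ∈ Finset.Icc 1 (m+2),
      (catalan (j - 1) : ℚ) * (catalan (n - j) : ℚ) := by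
    rw [U, Finset.sum_range_succ]; rfl
  have hU1 : U n (m+1) = U n m + ∑ j ∈ Finset.Icc 1 (m+1),
      (catalan (j - 1) : ℚ) * (catalan (n - j) : ℚ) := by
    rw [U, Finset.sum_range_succ]; rfl
  have hV : ∑ j ∈ Finset.Icc 1 (m+2), (catalan (j - 1) : ℚ) * (catalan (n - j) : ℚ)
      = (∑ j ∈ Finset.Icc 1 (m+1), (catalan (j - 1) : ℚ) * (catalan (n - j) : ℚ))
        + (catalan (m+1) : ℚ) * (catalan (n - (m+2)) : ℚ) := by
    rw [show m + 2 = (m+1) + 1 from rfl,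
      Finset.sum_Icc_succ_top (show 1 ≤ (m+1)+1 by omega)]
    norm_num
  simp only [A, hU2, hU1, hV]
  push_cast
  ring

lemma key : ∀ m l : ℕ, A (l + m + 1) m = b l m := by
  intro m
  induction m using Nat.strong_induction_on with
  | _ m ih =>
    match m with
    | 0 =>
      intro l
      have hU : U (l + 0 + 1) 0 = 0 := by simp [U]
      rw [A, hU]
      rw [b, choose_cat l]
      have hc : (Nat.choose (2 * (0 + 1)) (0 + 1) : ℚ) = 2 := by norm_num
      rw [hc]
      have h2 : ((l:ℚ) + 2) ≠ 0 := by positivity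
      have h1 : ((l:ℚ) + 1) ≠ 0 := by positivity
      push_cast
      field_simp
      try ring
    | 1 =>
      intro l
      have hU : U (l + 1 + 1) 1 = (catalan 0 : ℚ) * (catalan (l + 1) : ℚ) := by
        simp [U, Finset.sum_range_succ]
      rw [A, hU]
      rw [b, choose_cat l]
      have hc : (Nat.choose (2 * (1 + 1)) (1 + 1) : ℚ) = 6 := by
        have h : Nat.choose (2 * (1 + 1)) (1 + 1) = 6 := by decide
        rw [h]; norm_num
      rw [hc]
      have cl1 := cat_q (l+1)
      push_cast at cl1
      have gl2 : (catalan (l+1+1) : ℚ)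
          = 2*(2*(l:ℚ)+3)*(catalan (l+1) : ℚ) / ((l:ℚ)+3) := by
        rw [eq_div_iff (by positivity)]
        linear_combination cl1
      rw [gl2, catalan_zero]
      have h3 : ((l:ℚ) + 3) ≠ 0 := by positivity
      have h2 : ((l:ℚ) + 2) ≠ 0 := by positivity
      push_cast
      field_simp
      ring
    | (m+2) =>
      intro l
      have h1 : A ((l+1) + (m+1) + 1) (m+1) = b (l+1) (m+1) := ih (m+1) (by omega) (l+1)
      have h0 : A ((l+2) + m + 1) m = b (l+2) m := ih m (by omega) (l+2)
      have e1 : (l+1) + (m+1) + 1 = l + (m+2) + 1 := by omega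
      have e0 : (l+2) + m + 1 = l + (m+2) + 1 := by omega
      rw [e1] at h1; rw [e0] at h0
      have hrec := A_rec (l + (m+2) + 1) m
      have esub : l + (m+2) + 1 - (m+2) = l + 1 := by omega
      rw [esub] at hrec
      rw [hrec, h1, h0]
      linarith [b_rec l m]

theorem stmt_7 (l m : ℕ) :
    ((m + 1 : ℚ) * (catalan (l + m + 1) : ℚ) -
        ∑ i ∈ Finset.range (m + 1),
          ((∑ j ∈ Finset.Icc 1 i,
              (catalan (j - 1) : ℚ) * (catalan (l + m + 1 - j) : ℚ)) +
            ∑ j ∈ Finset.Icc 1 (m - i),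
              (catalan (l + m + 1 - j) : ℚ) * (catalan (j - 1) : ℚ))) =
      b l m := by
  have hsplit : ∑ i ∈ Finset.range (m + 1),
      ((∑ j ∈ Finset.Icc 1 i,
          (catalan (j - 1) : ℚ) * (catalan (l + m + 1 - j) : ℚ)) +
        ∑ j ∈ Finset.Icc 1 (m - i),
          (catalan (l + m + 1 - j) : ℚ) * (catalan (j - 1) : ℚ))
      = 2 * U (l + m + 1) m := by
    rw [Finset.sum_add_distrib]
    have hrefl : ∑ i ∈ Finset.range (m + 1),
        ∑ j ∈ Finset.Icc 1 (m - i),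
          (catalan (l + m + 1 - j) : ℚ) * (catalan (j - 1) : ℚ)
        = ∑ i ∈ Finset.range (m + 1),
          ∑ j ∈ Finset.Icc 1 i,
            (catalan (j - 1) : ℚ) * (catalan (l + m + 1 - j) : ℚ) := by
      rw [← Finset.sum_range_reflect (fun i => ∑ j ∈ Finset.Icc 1 i,
        (catalan (j - 1) : ℚ) * (catalan (l + m + 1 - j) : ℚ)) (m+1)]
      apply Finset.sum_congr rfl
      intro i hi
      have h : m + 1 - 1 - i = m - i := by omega
      rw [h]
      apply Finset.sum_congr rfl
      intro j _
      ring
    rw [hrefl, U, two_mul]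
  rw [hsplit]
  have hk := key m l
  rw [A] at hk
  exact hk
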